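/- Let p be a prime, q = p^α, n ≥ 1, and let F ⊆ 2^[n] be a family of subsets of [n]. Suppose L ⊊ {0,...,q-1}, and for distinct Y, X ∈ 2^[n] indexed as pairs (X_1,Y_1),...,(X_m,Y_m) with |Y_i| mod q ∉ L for all i and |X_t ∩ Y_i| mod q ∈ L for all t > i. Then m ≤ Σ_{j=0}^{q-1} C(n,j). -/

import Mathlib

open Finset

private def cAux (p : ℕ) (v : ℕ → ZMod p) : ℕ → ZMod p
  | j => v j - ∑ k ∈ (Finset.range j).attach, cAux p v k.1 * (j.choose k.1 : ZMod p)
  decreasing_by exact Finset.mem_range.mp k.2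

private lemma cAux_solve (p : ℕ) (v : ℕ → ZMod p) (t : ℕ) :
    ∑ k ∈ Finset.range (t + 1), cAux p v k * (t.choose k : ZMod p) = v t := by
  rw [Finset.sum_range_succ, Nat.choose_self, Nat.cast_one, mul_one]
  conv_lhs => rw [cAux]
  rw [← Finset.sum_attach (Finset.range t) (fun k => cAux p v k * (t.choose k : ZMod p))]
  ring

private lemma cAux_solve' (p q : ℕ) (v : ℕ → ZMod p) (t : ℕ) (ht : t < q) :
    ∑ k ∈ Finset.range q, cAux p v k * (t.choose k : ZMod p) = v t := by
  rw [← cAux_solve p v t]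
  symm
  apply Finset.sum_subset (Finset.range_subset_range.mpr ht)
  intro k _ hk
  rw [Finset.mem_range, not_lt] at hk
  rw [Nat.choose_eq_zero_of_lt (by omega), Nat.cast_zero, mul_zero]

private lemma choose_cast_mod (p : ℕ) [Fact p.Prime] (α : ℕ) :
    ∀ t k : ℕ, k < p ^ α → ((t.choose k : ZMod p)) = (((t % p ^ α).choose k : ZMod p)) := by
  induction α with
  | zero =>
    intro t k hk
    have : k = 0 := by simpa using hk
    simp [this]
  | succ α ih =>
    intro t k hk
    have hp : 0 < p := (Fact.out : p.Prime).pos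
    have h1 : (t.choose k : ZMod p) =
        ((t % p).choose (k % p) : ZMod p) * ((t / p).choose (k / p) : ZMod p) := by
      have := (Choose.choose_modEq_choose_mod_mul_choose_div_nat (p := p) (n := t) (k := k))
      rw [← ZMod.natCast_eq_natCast_iff] at this
      push_cast at this
      exact this
    have h2 : ((t % p ^ (α + 1)).choose k : ZMod p) =
        (((t % p ^ (α + 1)) % p).choose (k % p) : ZMod p) *
          (((t % p ^ (α + 1)) / p).choose (k / p) : ZMod p) := by
      have := (Choose.choose_modEq_choose_mod_mul_choose_div_nat (p := p)
        (n := t % p ^ (α + 1)) (k := k))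
      rw [← ZMod.natCast_eq_natCast_iff] at this
      push_cast at this
      exact this
    have hmm : (t % p ^ (α + 1)) % p = t % p :=
      Nat.mod_mod_of_dvd t (dvd_pow_self p (Nat.succ_ne_zero α))
    have hdd : (t % p ^ (α + 1)) / p = (t / p) % p ^ α := by
      rw [pow_succ']
      exact Nat.mod_mul_right_div_self t p (p ^ α)
    have hkp : k / p < p ^ α := by
      rw [Nat.div_lt_iff_lt_mul hp, ← pow_succ]
      exact hk
    rw [h1, h2, hmm, hdd, ih (t / p) (k / p) hkp]

private lemma choose_as_sum (p n : ℕ) (S Y : Finset (Fin n)) (k : ℕ) :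
    (((S ∩ Y).card.choose k : ZMod p)) =
      ∑ T ∈ Y.powersetCard k, (if T ⊆ S then (1 : ZMod p) else 0) := by
  have hfil : (Y.powersetCard k).filter (fun T => T ⊆ S) = (S ∩ Y).powersetCard k := by
    ext T
    simp only [Finset.mem_filter, Finset.mem_powersetCard, Finset.subset_inter_iff]
    tauto
  rw [Finset.sum_ite, Finset.sum_const, Finset.sum_const_zero, add_zero, hfil,
    Finset.card_powersetCard]
  simp

/-- Core triangular step in the proof of Theorem main3: given pairs
`(X_1,Y_1),...,(X_m,Y_m)` of subsets of `[n]` with `Y_i ⊆ X_i`,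
`|Y_i| mod q ∉ L` for all `i`, and `|X_t ∩ Y_i| mod q ∈ L` for all `t > i`,
we have `m ≤ Σ_{j=0}^{q-1} C(n,j)`. -/
theorem stmt17 (p α n m : ℕ) (hp : p.Prime) (hα : 1 ≤ α) (q : ℕ) (hq : q = p ^ α)
    (L : Finset ℕ) (hL : L ⊂ Finset.range q)
    (X Y : Fin m → Finset (Fin n))
    (hsub : ∀ i, Y i ⊆ X i)
    (havoid : ∀ i, (Y i).card % q ∉ L)
    (hint : ∀ i t : Fin m, i < t → (X t ∩ Y i).card % q ∈ L) :
    m ≤ ∑ j ∈ Finset.range q, n.choose j := by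
  haveI : Fact p.Prime := ⟨hp⟩
  subst hq
  set q := p ^ α with hq
  have hq0 : 0 < q := pow_pos hp.pos α
  -- target values
  set v : ℕ → ZMod p := fun t => if t ∈ L then 0 else 1 with hv
  -- the separating function
  set F : ℕ → ZMod p := fun t => ∑ k ∈ Finset.range q, cAux p v k * (t.choose k : ZMod p)
    with hF
  have hFval : ∀ t : ℕ, F t = v (t % q) := by
    intro t
    have : F t = F (t % q) := by
      apply Finset.sum_congr rfl
      intro k hk
      rw [Finset.mem_range] at hk
      rw [choose_cast_mod p α t k hk]
    rw [this]
    exact cAux_solve' p q v (t % q) (Nat.mod_lt t hq0)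
  -- the functions g i
  set g : Fin m → (Finset (Fin n) → ZMod p) := fun i S => F ((S ∩ Y i).card) with hg
  have gone : ∀ i, g i (X i) = 1 := by
    intro i
    have h1 : X i ∩ Y i = Y i := Finset.inter_eq_right.mpr (hsub i)
    simp only [hg, h1, hFval]
    simp [hv, havoid i]
  have gzero : ∀ i t : Fin m, i < t → g i (X t) = 0 := by
    intro i t hit
    simp only [hg, hFval]
    simp [hv, hint i t hit]
  -- linear independence
  have li : LinearIndependent (ZMod p) g := by
    rw [linearIndependent_iff'']
    intro s c hc hsum
    suffices H : ∀ N : ℕ, ∀ i : Fin m, m - i.val ≤ N → c i = 0 by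
      exact fun i => H m i (by omega)
    intro N
    induction N with
    | zero => intro i hi; exact absurd hi (by have := i.isLt; omega)
    | succ N ih =>
      intro i _
      by_cases his : i ∈ s
      · have hz : ∀ j : Fin m, i < j → c j = 0 := by
          intro j hj
          exact ih j (by have := Fin.lt_iff_val_lt_val.mp hj; omega)
        have he : ∑ j ∈ s, c j * g j (X i) = 0 := by
          have h0 := congrFun hsum (X i)
          simpa [Finset.sum_apply] using h0
        rw [Finset.sum_eq_single i
          (by
            intro j _ hne
            rcases lt_or_gt_of_ne hne with h | h
            · rw [gzero j i h, mul_zero]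
            · rw [hz j h, zero_mul])
          (fun h => absurd his h)] at he
        rw [gone i, mul_one] at he
        exact he
      · exact hc i his
  -- the spanning set
  set e : Finset (Fin n) → (Finset (Fin n) → ZMod p) :=
    fun T S => if T ⊆ S then (1 : ZMod p) else 0 with he
  set D : Finset (Finset (Fin n)) :=
    Finset.univ.filter (fun T => T.card < q) with hD
  set E : Finset (Finset (Fin n) → ZMod p) := D.image e with hE
  have hspan : Set.range g ≤ Submodule.span (ZMod p) (E : Set (Finset (Fin n) → ZMod p)) := by
    rintro _ ⟨i, rfl⟩
    have hgi : g i = ∑ k ∈ Finset.range q, ∑ T ∈ (Y i).powersetCard k, cAux p v k • e T := by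
      funext S
      simp only [hg, hF, Finset.sum_apply, Pi.smul_apply, smul_eq_mul]
      apply Finset.sum_congr rfl
      intro k _
      rw [choose_as_sum p n S (Y i) k, Finset.mul_sum]
    rw [hgi]
    apply Submodule.sum_mem
    intro k hk
    apply Submodule.sum_mem
    intro T hT
    apply Submodule.smul_mem
    apply Submodule.subset_span
    rw [Finset.mem_powersetCard] at hT
    rw [Finset.mem_range] at hk
    exact Finset.mem_coe.mpr (Finset.mem_image.mpr ⟨T,
      Finset.mem_filter.mpr ⟨Finset.mem_univ T, hT.2 ▸ hk⟩, rfl⟩)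
  have hm : m ≤ E.card := by
    have hcard := linearIndependent_le_span' g li (E : Set (Finset (Fin n) → ZMod p)) hspan
    simp only [Cardinal.mk_fintype, Fintype.card_fin, Finset.coe_sort_coe, Fintype.card_coe,
      Nat.cast_le] at hcard
    exact hcard
  -- count D
  have hDcard : D.card = ∑ j ∈ Finset.range q, n.choose j := by
    have hDeq : D = (Finset.range q).biUnion
        (fun j => Finset.powersetCard j (Finset.univ : Finset (Fin n))) := by
      ext T
      simp only [hD, Finset.mem_filter, Finset.mem_univ, true_and, Finset.mem_biUnion,
        Finset.mem_range, Finset.mem_powersetCard]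
      constructor
      · intro h; exact ⟨T.card, h, Finset.subset_univ T, rfl⟩
      · rintro ⟨j, hj, _, rfl⟩; exact hj
    rw [hDeq, Finset.card_biUnion]
    · apply Finset.sum_congr rfl
      intro j _
      rw [Finset.card_powersetCard, Finset.card_univ, Fintype.card_fin]
    · intro x _ y _ hxy
      rw [Function.onFun, Finset.disjoint_left]
      intro T hTx hTy
      rw [Finset.mem_powersetCard] at hTx hTy
      exact hxy (hTx.2 ▸ hTy.2)
  calc m ≤ E.card := hm
    _ ≤ D.card := Finset.card_image_le
    _ = _ := hDcard
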